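/- Let 0 < q < 1 and let ν be a real number with ν > 0. Then for all x > 0, the q-derivative at x of the function G(x) := −(1−q)·(x/q)^{1−ν}·J_{ν−1}^{(3)}(x/q; q²) equals x^{1−ν}·J_ν^{(3)}(x; q²). (Equivalently, ∫ x^{1−ν} J_ν^{(3)}(x;q²) d_q x = −(1−q)·(x/q)^{1−ν}·J_{ν−1}^{(3)}(x/q;q²).) -/

import Mathlib

/-- The Jackson `q`-derivative `(D_q f)(x) = (f(x) - f(qx)) / ((1-q)x)`. -/
noncomputable def qDeriv (q : ℝ) (f : ℝ → ℝ) (x : ℝ) : ℝ :=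
  (f x - f (q * x)) / ((1 - q) * x)

/-- The finite q-shifted factorial `(z; q)_n`. -/
noncomputable def qPoch (z q : ℝ) (n : ℕ) : ℝ :=
  ∏ k ∈ Finset.range n, (1 - z * q ^ k)

/-- The infinite q-shifted factorial `(z; q)_∞`. -/
noncomputable def qPochInf (z q : ℝ) : ℝ :=
  ∏' k : ℕ, (1 - z * q ^ k)

/-- The third Jackson q-Bessel function `J_ν^{(3)}(x; q²)`. -/
noncomputable def J3 (q ν x : ℝ) : ℝ :=
  (qPochInf (q ^ (2 * ν + 2)) (q ^ 2) / qPochInf (q ^ 2) (q ^ 2)) *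
    ∑' n : ℕ, ((-1 : ℝ) ^ n * q ^ (n * (n + 1)) * x ^ (2 * (n : ℝ) + ν)) /
      (qPoch (q ^ 2) (q ^ 2) n *
        ∏ j ∈ Finset.range n, (1 - q ^ (2 * ν + 2 + 2 * (j : ℝ))))

open Real Filter Finset

section Aux

lemma multipliable_aux {z Q : ℝ} (hz0 : 0 < z) (hz1 : z < 1) (hQ0 : 0 < Q) (hQ1 : Q < 1) :
    Multipliable (fun k : ℕ => 1 - z * Q ^ k) := by
  have hfac : ∀ k : ℕ, 0 < 1 - z * Q ^ k := by
    intro k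
    have h1 : z * Q ^ k ≤ z * 1 := by
      apply mul_le_mul_of_nonneg_left _ hz0.le
      exact pow_le_one₀ hQ0.le hQ1.le
    nlinarith
  have hlog : Summable (fun k : ℕ => Real.log (1 - z * Q ^ k)) := by
    apply Summable.of_norm_bounded (g := fun k : ℕ => (1 - z)⁻¹ * (z * Q ^ k))
    · exact (Summable.mul_left z (summable_geometric_of_lt_one hQ0.le hQ1)).mul_left _
    · intro k
      have hk0 : 0 < 1 - z * Q ^ k := hfac k
      have hQk : 0 < Q ^ k := pow_pos hQ0 k
      have hkle : z * Q ^ k ≤ z := by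
        have := pow_le_one₀ hQ0.le hQ1.le (n := k)
        nlinarith
      have hlogle : Real.log (1 - z * Q ^ k) ≤ 0 :=
        Real.log_nonpos (by positivity) (by nlinarith)
      have hlb : 1 - (1 - z * Q ^ k)⁻¹ ≤ Real.log (1 - z * Q ^ k) :=
        Real.one_sub_inv_le_log_of_pos hk0
      rw [Real.norm_eq_abs, abs_of_nonpos hlogle]
      have h1 : (1 - z * Q ^ k)⁻¹ - 1 = (z * Q ^ k) / (1 - z * Q ^ k) := by
        field_simp
        ring
      have h2 : (z * Q ^ k) / (1 - z * Q ^ k) ≤ (z * Q ^ k) / (1 - z) := by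
        apply div_le_div_of_nonneg_left (by positivity) (by linarith) (by nlinarith)
      calc -Real.log (1 - z * Q ^ k) ≤ (1 - z * Q ^ k)⁻¹ - 1 := by linarith
        _ = (z * Q ^ k) / (1 - z * Q ^ k) := h1
        _ ≤ (z * Q ^ k) / (1 - z) := h2
        _ = (1 - z)⁻¹ * (z * Q ^ k) := by ring
  exact Real.multipliable_of_summable_log hfac hlog

lemma qPochInf_peel {z Q : ℝ} (hz0 : 0 < z) (hz1 : z < 1) (hQ0 : 0 < Q) (hQ1 : Q < 1) :
    qPochInf z Q = (1 - z) * qPochInf (z * Q) Q := by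
  have hm : Multipliable (fun n : ℕ => 1 - z * Q ^ (n + 1)) := by
    apply (multipliable_aux (mul_pos hz0 hQ0) (by nlinarith) hQ0 hQ1).congr
    intro k
    rw [pow_succ]
    ring
  have h := tprod_eq_zero_mul' (f := fun k : ℕ => 1 - z * Q ^ k) hm
  rw [qPochInf, h, qPochInf]
  simp only [pow_zero, mul_one]
  congr 1
  apply tprod_congr
  intro k
  rw [pow_succ]
  ring

lemma qpoch_bounds {q : ℝ} (hq : 0 < q) (hq1 : q < 1) (n : ℕ) :
    (1 - q ^ 2) ^ n ≤ qPoch (q ^ 2) (q ^ 2) n := by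
  have hq2 : (0:ℝ) < q ^ 2 := by positivity
  have hq21 : q ^ 2 < 1 := by nlinarith
  rw [qPoch]
  calc (1 - q ^ 2) ^ n = ∏ _k ∈ Finset.range n, (1 - q ^ 2) := by
        rw [Finset.prod_const, Finset.card_range]
    _ ≤ _ := ?_
  apply Finset.prod_le_prod
  · intro i _; linarith
  · intro i _
    have : q ^ 2 * (q ^ 2) ^ i ≤ q ^ 2 * 1 :=
      mul_le_mul_of_nonneg_left (pow_le_one₀ hq2.le hq21.le) hq2.le
    linarith

lemma prodP_bounds {q : ℝ} (e : ℝ) (hq : 0 < q) (hq1 : q < 1) (he : 0 < e) (n : ℕ) :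
    (1 - q ^ e) ^ n ≤ ∏ j ∈ Finset.range n, (1 - q ^ (e + 2 * (j : ℝ))) := by
  have hqe1 : q ^ e < 1 := Real.rpow_lt_one hq.le hq1 he
  calc (1 - q ^ e) ^ n = ∏ _k ∈ Finset.range n, (1 - q ^ e) := by
        rw [Finset.prod_const, Finset.card_range]
    _ ≤ _ := ?_
  apply Finset.prod_le_prod
  · intro i _; linarith
  · intro i _
    have : q ^ (e + 2 * (i : ℝ)) ≤ q ^ e := by
      apply Real.rpow_le_rpow_of_exponent_ge hq hq1.le
      have : (0:ℝ) ≤ (i:ℝ) := Nat.cast_nonneg i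
      linarith
    linarith

lemma summable_aux {q : ℝ} (e c : ℝ) (hq : 0 < q) (hq1 : q < 1) (he : 0 < e) :
    Summable (fun n : ℕ => ((-1:ℝ) ^ n * q ^ (n * (n + 1)) * c ^ n) /
      (qPoch (q ^ 2) (q ^ 2) n * ∏ j ∈ Finset.range n, (1 - q ^ (e + 2 * (j : ℝ))))) := by
  have hq2 : (0:ℝ) < q ^ 2 := by positivity
  have hq21 : q ^ 2 < 1 := by nlinarith
  have hqe1 : q ^ e < 1 := Real.rpow_lt_one hq.le hq1 he
  have hqe0 : 0 < q ^ e := Real.rpow_pos_of_pos hq e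
  set β : ℝ := (1 - q ^ 2) * (1 - q ^ e) with hβ
  have hβ0 : 0 < β := by apply mul_pos <;> linarith
  set d : ℝ := |c| / β with hd
  have hd0 : 0 ≤ d := by positivity
  have hg : Summable (fun n : ℕ => q ^ (n * (n + 1)) * d ^ n) := by
    apply summable_of_ratio_norm_eventually_le (r := 1/2) (by norm_num)
    have htend : Tendsto (fun n : ℕ => (q ^ 2) ^ (n + 1) * d) atTop (nhds 0) := by
      have h1 : Tendsto (fun n : ℕ => (q ^ 2) ^ n) atTop (nhds 0) :=
        tendsto_pow_atTop_nhds_zero_of_lt_one hq2.le hq21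
      have h2 := (h1.comp (tendsto_add_atTop_nat 1)).mul_const d
      simpa using h2
    have hev : ∀ᶠ n : ℕ in atTop, (q ^ 2) ^ (n + 1) * d < 1/2 :=
      htend.eventually (gt_mem_nhds (by norm_num))
    filter_upwards [hev] with n hn
    have hgn : (0:ℝ) ≤ q ^ (n * (n + 1)) * d ^ n := by positivity
    have heq : q ^ ((n+1) * ((n+1) + 1)) * d ^ (n+1)
        = (q ^ (n * (n + 1)) * d ^ n) * ((q ^ 2) ^ (n + 1) * d) := by ring
    rw [Real.norm_eq_abs, Real.norm_eq_abs, abs_of_nonneg hgn, abs_of_nonneg (by positivity),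
      heq]
    have h5 : (0:ℝ) ≤ (q ^ 2) ^ (n+1) * d := by positivity
    nlinarith
  apply Summable.of_norm_bounded hg
  intro n
  have hP := prodP_bounds e hq hq1 he n
  have hQ := qpoch_bounds hq hq1 n
  have hPpos : (0:ℝ) < (1 - q ^ e) ^ n := pow_pos (by linarith) n
  have hQpos : (0:ℝ) < (1 - q ^ 2) ^ n := pow_pos (by linarith) n
  have hden : β ^ n ≤ qPoch (q ^ 2) (q ^ 2) n * ∏ j ∈ Finset.range n, (1 - q ^ (e + 2 * (j : ℝ))) := by
    rw [hβ, mul_pow]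
    exact mul_le_mul hQ hP hPpos.le (by linarith [qpoch_bounds hq hq1 n])
  have hdenpos : (0:ℝ) < β ^ n := by positivity
  rw [Real.norm_eq_abs, abs_div]
  have hnum : |(-1:ℝ) ^ n * q ^ (n * (n + 1)) * c ^ n| = q ^ (n * (n + 1)) * |c| ^ n := by
    simp [abs_mul, abs_pow, abs_of_nonneg hq.le]
  rw [hnum, abs_of_nonneg (le_trans hdenpos.le hden)]
  calc q ^ (n * (n + 1)) * |c| ^ n /
      (qPoch (q ^ 2) (q ^ 2) n * ∏ j ∈ Finset.range n, (1 - q ^ (e + 2 * (j : ℝ))))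
      ≤ q ^ (n * (n + 1)) * |c| ^ n / β ^ n := by
        apply div_le_div_of_nonneg_left (by positivity) hdenpos hden
    _ = q ^ (n * (n + 1)) * d ^ n := by
        rw [hd, div_pow]
        ring

/-- The shifted series term for `y^{1-ν} J3 q (ν-1) y`. -/
noncomputable def uAux (q ν y : ℝ) (n : ℕ) : ℝ :=
  ((-1:ℝ) ^ n * q ^ (n * (n + 1)) * (y ^ 2) ^ n) /
    (qPoch (q ^ 2) (q ^ 2) n *
      ∏ j ∈ Finset.range n, (1 - q ^ (2 * (ν - 1) + 2 + 2 * (j : ℝ))))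

/-- The shifted series term for `x^{1-ν} J3 q ν x`. -/
noncomputable def vAux (q ν x : ℝ) (m : ℕ) : ℝ :=
  ((-1:ℝ) ^ m * q ^ (m * (m + 1)) * x ^ (2 * m + 1)) /
    (qPoch (q ^ 2) (q ^ 2) m *
      ∏ j ∈ Finset.range m, (1 - q ^ (2 * ν + 2 + 2 * (j : ℝ))))

lemma J3_mul_left (q ν y : ℝ) (hy : 0 < y) :
    y ^ (1 - ν) * J3 q (ν - 1) y =
    (qPochInf (q ^ (2 * (ν - 1) + 2)) (q ^ 2) / qPochInf (q ^ 2) (q ^ 2)) *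
      ∑' n, uAux q ν y n := by
  rw [J3, ← mul_assoc, mul_comm (y ^ (1 - ν)) _, mul_assoc, ← tsum_mul_left]
  congr 1
  apply tsum_congr
  intro n
  rw [uAux, ← mul_div_assoc]
  congr 1
  have h : y ^ (1 - ν) * y ^ (2 * (n:ℝ) + (ν - 1)) = (y ^ 2) ^ n := by
    rw [← Real.rpow_add hy]
    have h2 : (1 - ν) + (2 * (n:ℝ) + (ν - 1)) = ((2 * n : ℕ) : ℝ) := by push_cast; ring
    rw [h2, Real.rpow_natCast, pow_mul]
  calc y ^ (1 - ν) * ((-1:ℝ) ^ n * q ^ (n * (n + 1)) * y ^ (2 * (n:ℝ) + (ν - 1)))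
      = (-1:ℝ) ^ n * q ^ (n * (n + 1)) * (y ^ (1 - ν) * y ^ (2 * (n:ℝ) + (ν - 1))) := by ring
    _ = (-1:ℝ) ^ n * q ^ (n * (n + 1)) * (y ^ 2) ^ n := by rw [h]

lemma J3_mul_left' (q ν x : ℝ) (hx : 0 < x) :
    x ^ (1 - ν) * J3 q ν x =
    (qPochInf (q ^ (2 * ν + 2)) (q ^ 2) / qPochInf (q ^ 2) (q ^ 2)) *
      ∑' m, vAux q ν x m := by
  rw [J3, ← mul_assoc, mul_comm (x ^ (1 - ν)) _, mul_assoc, ← tsum_mul_left]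
  congr 1
  apply tsum_congr
  intro n
  rw [vAux, ← mul_div_assoc]
  congr 1
  have h : x ^ (1 - ν) * x ^ (2 * (n:ℝ) + ν) = x ^ (2 * n + 1) := by
    rw [← Real.rpow_add hx]
    have h2 : (1 - ν) + (2 * (n:ℝ) + ν) = ((2 * n + 1 : ℕ) : ℝ) := by push_cast; ring
    rw [h2, Real.rpow_natCast]
  calc x ^ (1 - ν) * ((-1:ℝ) ^ n * q ^ (n * (n + 1)) * x ^ (2 * (n:ℝ) + ν))
      = (-1:ℝ) ^ n * q ^ (n * (n + 1)) * (x ^ (1 - ν) * x ^ (2 * (n:ℝ) + ν)) := by ring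
    _ = (-1:ℝ) ^ n * q ^ (n * (n + 1)) * x ^ (2 * n + 1) := by rw [h]

lemma termwise (q ν x : ℝ) (hq : 0 < q) (hq1 : q < 1) (hν : 0 < ν) (hx : 0 < x) (m : ℕ) :
    (qPochInf (q ^ (2 * (ν - 1) + 2)) (q ^ 2) / qPochInf (q ^ 2) (q ^ 2)) *
        (uAux q ν x (m + 1) - uAux q ν (x / q) (m + 1))
      = x * ((qPochInf (q ^ (2 * ν + 2)) (q ^ 2) / qPochInf (q ^ 2) (q ^ 2)) *
        vAux q ν x m) := by
  have hq2 : (0:ℝ) < q ^ 2 := by positivity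
  have hq21 : q ^ 2 < 1 := by nlinarith
  have h2ν0 : (0:ℝ) < q ^ (2 * ν) := Real.rpow_pos_of_pos hq _
  have h2ν1 : q ^ (2 * ν) < 1 := Real.rpow_lt_one hq.le hq1 (by linarith)
  have hpeel : qPochInf (q ^ (2 * (ν - 1) + 2)) (q ^ 2)
      = (1 - q ^ (2 * ν)) * qPochInf (q ^ (2 * ν + 2)) (q ^ 2) := by
    rw [show 2 * (ν - 1) + 2 = 2 * ν by ring,
      qPochInf_peel h2ν0 h2ν1 hq2 hq21]
    congr 2
    rw [Real.rpow_add hq, show ((2:ℝ)) = ((2:ℕ):ℝ) by norm_num, Real.rpow_natCast]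
  have hmain : (1 - q ^ (2 * ν)) * (uAux q ν x (m + 1) - uAux q ν (x / q) (m + 1))
      = x * vAux q ν x m := by
    have hQsucc : qPoch (q ^ 2) (q ^ 2) (m + 1)
        = qPoch (q ^ 2) (q ^ 2) m * (1 - q ^ 2 * (q ^ 2) ^ m) := by
      rw [qPoch, qPoch, Finset.prod_range_succ]
    have hPsucc : (∏ j ∈ Finset.range (m + 1), (1 - q ^ (2 * (ν - 1) + 2 + 2 * (j : ℝ))))
        = (∏ j ∈ Finset.range m, (1 - q ^ (2 * ν + 2 + 2 * (j : ℝ)))) * (1 - q ^ (2 * ν)) := by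
      rw [Finset.prod_range_succ']
      congr 1
      · apply Finset.prod_congr rfl
        intro j _
        congr 1
        push_cast
        ring
      · congr 1
        push_cast
        ring
    have hQm : (0:ℝ) < qPoch (q ^ 2) (q ^ 2) m :=
      lt_of_lt_of_le (pow_pos (by linarith) m) (qpoch_bounds hq hq1 m)
    have hPm : (0:ℝ) < ∏ j ∈ Finset.range m, (1 - q ^ (2 * ν + 2 + 2 * (j : ℝ))) := by
      have := prodP_bounds (2 * ν + 2) hq hq1 (by linarith) m
      have h1 : q ^ (2 * ν + 2) < 1 := Real.rpow_lt_one hq.le hq1 (by linarith)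
      calc (0:ℝ) < (1 - q ^ (2 * ν + 2)) ^ m := pow_pos (by linarith) m
        _ ≤ _ := this
    have hfac : (0:ℝ) < 1 - q ^ 2 * (q ^ 2) ^ m := by
      have : q ^ 2 * (q ^ 2) ^ m ≤ q ^ 2 * 1 :=
        mul_le_mul_of_nonneg_left (pow_le_one₀ hq2.le hq21.le) hq2.le
      nlinarith
    rw [uAux, uAux, vAux, hQsucc, hPsucc]
    rw [div_pow x q 2]
    have hone : (1:ℝ) - q ^ (2 * ν) ≠ 0 := by linarith
    rw [div_pow (x ^ 2) (q ^ 2) (m + 1)]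
    field_simp [hQm.ne', hPm.ne', hfac.ne', hq.ne', hone]
    ring
  rw [hpeel]
  linear_combination (qPochInf (q ^ (2 * ν + 2)) (q ^ 2) / qPochInf (q ^ 2) (q ^ 2)) * hmain

end Aux

/-- `∫ x^{1−ν} J_ν^{(3)}(x;q²) d_q x = −(1−q)(x/q)^{1−ν} J_{ν−1}^{(3)}(x/q;q²)`. -/
theorem qIntegral_J3_negnu (q ν : ℝ) (hq : 0 < q) (hq1 : q < 1) (hν : 0 < ν) :
    ∀ x : ℝ, 0 < x →
      qDeriv q (fun t => -(1 - q) * (t / q) ^ (1 - ν) * J3 q (ν - 1) (t / q)) x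
        = x ^ (1 - ν) * J3 q ν x := by
  intro x hx
  have h1q : (0:ℝ) < 1 - q := by linarith
  have hxq : 0 < x / q := div_pos hx hq
  have hxe : q * x / q = x := by field_simp
  have Su1 : Summable (uAux q ν x) := by
    have := summable_aux (q := q) (2 * (ν - 1) + 2) (x ^ 2) hq hq1 (by linarith)
    exact this
  have Su2 : Summable (uAux q ν (x / q)) := by
    have := summable_aux (q := q) (2 * (ν - 1) + 2) ((x / q) ^ 2) hq hq1 (by linarith)
    exact this
  have hw0 : uAux q ν x 0 - uAux q ν (x / q) 0 = 0 := by
    simp [uAux, qPoch]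
  have key : x ^ (1 - ν) * J3 q (ν - 1) x - (x / q) ^ (1 - ν) * J3 q (ν - 1) (x / q)
      = x * (x ^ (1 - ν) * J3 q ν x) := by
    rw [J3_mul_left q ν x hx, J3_mul_left q ν (x / q) hxq, J3_mul_left' q ν x hx,
      ← mul_sub, ← Summable.tsum_sub Su1 Su2, Summable.tsum_eq_zero_add (Su1.sub Su2), hw0, zero_add]
    calc (qPochInf (q ^ (2 * (ν - 1) + 2)) (q ^ 2) / qPochInf (q ^ 2) (q ^ 2)) *
          ∑' n, (uAux q ν x (n + 1) - uAux q ν (x / q) (n + 1))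
        = ∑' n, (qPochInf (q ^ (2 * (ν - 1) + 2)) (q ^ 2) / qPochInf (q ^ 2) (q ^ 2)) *
            (uAux q ν x (n + 1) - uAux q ν (x / q) (n + 1)) := tsum_mul_left.symm
      _ = ∑' n, x * ((qPochInf (q ^ (2 * ν + 2)) (q ^ 2) / qPochInf (q ^ 2) (q ^ 2)) *
            vAux q ν x n) := tsum_congr (fun n => termwise q ν x hq hq1 hν hx n)
      _ = x * ((qPochInf (q ^ (2 * ν + 2)) (q ^ 2) / qPochInf (q ^ 2) (q ^ 2)) *
            ∑' n, vAux q ν x n) := by rw [tsum_mul_left, tsum_mul_left]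
  simp only [qDeriv, hxe]
  rw [div_eq_iff (by positivity : (1 - q) * x ≠ 0)]
  linear_combination (1 - q) * key
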